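/- If S is an ergodic nonsingular m-transformation and f is a measurable function with (Uf)(x) = f(x) for almost all x, then f is constant almost everywhere. -/

import Mathlib

open MeasureTheory Set Filter Finset
open scoped ENNReal Classical

noncomputable section

/-- The stochastic kernel of a finite-multivalued transformation `S`:
`K(x,B) = |S(x) ∩ B| / |S(x)|`, valued in `ℝ≥0∞`. -/
def fker {X : Type*} (S : X → Finset X) (x : X) (B : Set X) : ℝ≥0∞ :=
  (((S x).filter (fun y => y ∈ B)).card : ℝ≥0∞) / ((S x).card : ℝ≥0∞)

/-- The set `S⁻¹_{k;l}(B) = {x : |S(x)| = k, |S(x) ∩ B| = l}`. -/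
def preimKL {X : Type*} (S : X → Finset X) (k l : ℕ) (B : Set X) : Set X :=
  {x | (S x).card = k ∧ ((S x).filter (fun y => y ∈ B)).card = l}

/-- The full preimage `S⁻¹(B) = {x : S(x) ∩ B ≠ ∅}`. -/
def fullPre {X : Type*} (S : X → Finset X) (B : Set X) : Set X :=
  {x | ∃ y ∈ S x, y ∈ B}

/-- The Koopman operator `Uf(x) = (1/|S(x)|) ∑_{y ∈ S(x)} f(y)`. -/
def koop {X : Type*} (S : X → Finset X) (f : X → ℝ) (x : X) : ℝ :=
  (∑ y ∈ S x, f y) / ((S x).card : ℝ)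

/-- `fullPre S B` is measurable whenever `B` is, given measurability of the `preimKL` sets. -/
lemma fullPre_measurable {X : Type*} [MeasurableSpace X] (S : X → Finset X)
    (hmeas : ∀ B : Set X, MeasurableSet B → ∀ k l : ℕ, MeasurableSet (preimKL S k l B))
    (B : Set X) (hB : MeasurableSet B) : MeasurableSet (fullPre S B) := by
  have heq : fullPre S B = ⋃ (k : ℕ), ⋃ (l : ℕ), ⋃ (_ : 1 ≤ l), preimKL S k l B := by
    ext x
    simp only [fullPre, preimKL, Set.mem_iUnion, Set.mem_setOf_eq]
    constructor
    · rintro ⟨y, hy, hyB⟩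
      refine ⟨(S x).card, ((S x).filter (fun y => y ∈ B)).card, ?_, rfl, rfl⟩
      exact Finset.card_pos.mpr ⟨y, Finset.mem_filter.mpr ⟨hy, hyB⟩⟩
    · rintro ⟨k, l, hl, -, hfl⟩
      have hpos : 0 < ((S x).filter (fun y => y ∈ B)).card := by omega
      obtain ⟨y, hy⟩ := Finset.card_pos.mp hpos
      exact ⟨y, (Finset.mem_filter.mp hy).1, (Finset.mem_filter.mp hy).2⟩
  rw [heq]
  exact MeasurableSet.iUnion fun k => MeasurableSet.iUnion fun l =>
    MeasurableSet.iUnion fun _ => hmeas B hB k l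

/-- If the average of `f` over a nonempty finset is `≥ c`, some element has `f ≥ c`. -/
lemma exists_ge_of_koop {X : Type*} (S : X → Finset X) (f : X → ℝ) (x : X)
    (hne : (S x).Nonempty) (c : ℝ) (h : c ≤ koop S f x) : ∃ y ∈ S x, c ≤ f y := by
  by_contra hcon
  push_neg at hcon
  have hsum : ∑ y ∈ S x, f y < ∑ _y ∈ S x, c := Finset.sum_lt_sum_of_nonempty hne hcon
  have hcard : (0:ℝ) < ((S x).card : ℝ) := by exact_mod_cast Finset.card_pos.mpr hne
  rw [Finset.sum_const, nsmul_eq_mul] at hsum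
  have h2 : c * ((S x).card : ℝ) ≤ ∑ y ∈ S x, f y := (le_div_iff₀ hcard).mp h
  nlinarith

/-- If the average of `f` over a nonempty finset is `< c`, some element has `f < c`. -/
lemma exists_lt_of_koop {X : Type*} (S : X → Finset X) (f : X → ℝ) (x : X)
    (hne : (S x).Nonempty) (c : ℝ) (h : koop S f x < c) : ∃ y ∈ S x, f y < c := by
  by_contra hcon
  push_neg at hcon
  have hsum : ∑ _y ∈ S x, c ≤ ∑ y ∈ S x, f y := Finset.sum_le_sum hcon
  have hcard : (0:ℝ) < ((S x).card : ℝ) := by exact_mod_cast Finset.card_pos.mpr hne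
  rw [Finset.sum_const, nsmul_eq_mul] at hsum
  have h2 : ∑ y ∈ S x, f y < c * ((S x).card : ℝ) := (div_lt_iff₀ hcard).mp h
  nlinarith

/-- Key dichotomy: under the hypotheses, every level set `{f ≥ c}` has measure 0 or 1. -/
lemma level_dichotomy {X : Type*} [MeasurableSpace X] (μ : Measure X)
    [IsProbabilityMeasure μ] (S : X → Finset X)
    (hcard : ∀ x, 1 ≤ (S x).card)
    (hmeas : ∀ B : Set X, MeasurableSet B → ∀ k l : ℕ, MeasurableSet (preimKL S k l B))
    (hns : ∀ B : Set X, MeasurableSet B → μ B = 0 → μ (fullPre S B) = 0)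
    (herg : ∀ B : Set X, MeasurableSet B → B \ fullPre S B = ∅ → Bᶜ \ fullPre S Bᶜ = ∅ →
      μ B = 0 ∨ μ Bᶜ = 0)
    (f : X → ℝ) (hf : Measurable f) (hUf : ∀ᵐ x ∂μ, koop S f x = f x) (c : ℝ) :
    μ {x | c ≤ f x} = 0 ∨ μ {x | c ≤ f x} = 1 := by
  obtain ⟨N, hNsub, hNmeas, hNnull⟩ := exists_measurable_superset_of_null (ae_iff.mp hUf)
  set fp : Set X → Set X := fullPre S with hfp
  set M : Set X := ⋃ n, fp^[n] N with hM
  have hiter_meas : ∀ n, MeasurableSet (fp^[n] N) := by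
    intro n; induction n with
    | zero => simpa using hNmeas
    | succ n ih => rw [Function.iterate_succ_apply']; exact fullPre_measurable S hmeas _ ih
  have hiter_null : ∀ n, μ (fp^[n] N) = 0 := by
    intro n; induction n with
    | zero => simpa using hNnull
    | succ n ih => rw [Function.iterate_succ_apply']; exact hns _ (hiter_meas n) ih
  have hMmeas : MeasurableSet M := MeasurableSet.iUnion hiter_meas
  have hMnull : μ M = 0 := measure_iUnion_null hiter_null
  have hMback : ∀ x y, y ∈ S x → y ∈ M → x ∈ M := by
    intro x y hyS hyM
    rw [hM, Set.mem_iUnion] at hyM ⊢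
    obtain ⟨n, hn⟩ := hyM
    refine ⟨n + 1, ?_⟩
    rw [Function.iterate_succ_apply']
    exact ⟨y, hyS, hn⟩
  have hNM : ∀ x, x ∉ M → koop S f x = f x := by
    intro x hx
    by_contra hne
    exact hx (Set.mem_iUnion.mpr ⟨0, by simpa using hNsub hne⟩)
  set A : Set X := {x | c ≤ f x} with hA
  have hAmeas : MeasurableSet A := measurableSet_le measurable_const hf
  set Q : ℕ → Set X := fun n => Nat.rec (A \ M) (fun _ Qn => M ∩ fullPre S Qn) n with hQdef
  have hQ0 : Q 0 = A \ M := rfl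
  have hQs : ∀ n, Q (n + 1) = M ∩ fullPre S (Q n) := fun n => rfl
  set B : Set X := ⋃ n, Q n with hB
  have hQmeas : ∀ n, MeasurableSet (Q n) := by
    intro n; induction n with
    | zero => exact hAmeas.diff hMmeas
    | succ n ih => exact hMmeas.inter (fullPre_measurable S hmeas _ ih)
  have hBmeas : MeasurableSet B := MeasurableSet.iUnion hQmeas
  have hinv1 : B ⊆ fullPre S B := by
    intro x hx
    rw [hB, Set.mem_iUnion] at hx
    obtain ⟨n, hn⟩ := hx
    cases n with
    | zero =>
      obtain ⟨hxA, hxM⟩ := hn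
      have hne : (S x).Nonempty := Finset.card_pos.mp (hcard x)
      have hc : c ≤ koop S f x := by rw [hNM x hxM]; exact hxA
      obtain ⟨y, hyS, hyc⟩ := exists_ge_of_koop S f x hne c hc
      have hyM : y ∉ M := fun h => hxM (hMback x y hyS h)
      exact ⟨y, hyS, Set.mem_iUnion.mpr ⟨0, hyc, hyM⟩⟩
    | succ n =>
      obtain ⟨-, y, hyS, hyQ⟩ := hn
      exact ⟨y, hyS, Set.mem_iUnion.mpr ⟨n, hyQ⟩⟩
  have hinv2 : Bᶜ ⊆ fullPre S Bᶜ := by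
    intro x hx
    by_cases hxM : x ∈ M
    · by_contra hcon
      apply hx
      obtain ⟨y, hyS⟩ := Finset.card_pos.mp (hcard x)
      have hyB : y ∈ B := by
        by_contra h; exact hcon ⟨y, hyS, h⟩
      rw [hB, Set.mem_iUnion] at hyB
      obtain ⟨n, hn⟩ := hyB
      exact Set.mem_iUnion.mpr ⟨n + 1, ⟨hxM, y, hyS, hn⟩⟩
    · have hxA : x ∉ A := fun h => hx (Set.mem_iUnion.mpr ⟨0, h, hxM⟩)
      have hlt : koop S f x < c := by
        rw [hNM x hxM]; exact lt_of_not_ge hxA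
      have hne : (S x).Nonempty := Finset.card_pos.mp (hcard x)
      obtain ⟨y, hyS, hyc⟩ := exists_lt_of_koop S f x hne c hlt
      have hyM : y ∉ M := fun h => hxM (hMback x y hyS h)
      refine ⟨y, hyS, ?_⟩
      intro hyB
      rw [hB, Set.mem_iUnion] at hyB
      obtain ⟨n, hn⟩ := hyB
      cases n with
      | zero => exact absurd hn.1 (not_le.mpr hyc)
      | succ n => exact hyM hn.1
  rcases herg B hBmeas (Set.diff_eq_empty.mpr hinv1) (Set.diff_eq_empty.mpr hinv2) with h0 | h1
  · left
    have hAB : A ⊆ B ∪ M := by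
      intro x hx
      by_cases hxM : x ∈ M
      · exact Or.inr hxM
      · exact Or.inl (Set.mem_iUnion.mpr ⟨0, hx, hxM⟩)
    have : μ A ≤ 0 := by
      calc μ A ≤ μ (B ∪ M) := measure_mono hAB
        _ ≤ μ B + μ M := measure_union_le _ _
        _ = 0 := by rw [h0, hMnull, add_zero]
    exact le_antisymm this zero_le
  · right
    have hBA : B ⊆ A ∪ M := by
      intro x hx
      rw [hB, Set.mem_iUnion] at hx
      obtain ⟨n, hn⟩ := hx
      cases n with
      | zero => exact Or.inl hn.1
      | succ n => exact Or.inr hn.1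
    have hBone : μ B = 1 := (prob_compl_eq_zero_iff hBmeas).mp h1
    have h1' : (1:ℝ≥0∞) ≤ μ A := by
      calc (1:ℝ≥0∞) = μ B := hBone.symm
        _ ≤ μ (A ∪ M) := measure_mono hBA
        _ ≤ μ A + μ M := measure_union_le _ _
        _ = μ A := by rw [hMnull, add_zero]
    exact le_antisymm prob_le_one h1'

/-- if `S` is an ergodic nonsingular m-transformation and `Uf = f` a.e.
for a measurable `f`, then `f` is constant a.e. -/
theorem ergodic_invariant_const {X : Type*} [MeasurableSpace X] (μ : Measure X)
    [IsProbabilityMeasure μ] (m : ℕ) (hm : 0 < m) (S : X → Finset X)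
    (hcard : ∀ x, 1 ≤ (S x).card ∧ (S x).card ≤ m)
    (hmeas : ∀ B : Set X, MeasurableSet B → ∀ k l : ℕ, MeasurableSet (preimKL S k l B))
    (hns : ∀ B : Set X, MeasurableSet B → μ B = 0 → μ (fullPre S B) = 0)
    (herg : ∀ B : Set X, MeasurableSet B → B \ fullPre S B = ∅ → Bᶜ \ fullPre S Bᶜ = ∅ →
      μ B = 0 ∨ μ Bᶜ = 0)
    (f : X → ℝ) (hf : Measurable f) (hUf : ∀ᵐ x ∂μ, koop S f x = f x) :
    ∃ c : ℝ, ∀ᵐ x ∂μ, f x = c := by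
  have key : ∀ c : ℝ, μ {x | c ≤ f x} = 0 ∨ μ {x | c ≤ f x} = 1 :=
    fun c => level_dichotomy μ S (fun x => (hcard x).1) hmeas hns herg f hf hUf c
  have hlevmeas : ∀ c : ℝ, MeasurableSet {x | c ≤ f x} :=
    fun c => measurableSet_le measurable_const hf
  set T : Set ℝ := {c | μ {x | c ≤ f x} = 1} with hT
  have hTne : T.Nonempty := by
    by_contra hcon
    have h0 : ∀ n : ℕ, μ {x | -(n:ℝ) ≤ f x} = 0 := by
      intro n
      rcases key (-(n:ℝ)) with h | h
      · exact h
      · exact absurd (⟨-(n:ℝ), h⟩ : T.Nonempty) hcon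
    have h2 : μ (⋃ n : ℕ, {x | -(n:ℝ) ≤ f x}) = 0 := measure_iUnion_null h0
    have huniv : (⋃ n : ℕ, {x | -(n:ℝ) ≤ f x}) = Set.univ := by
      ext x
      simp only [Set.mem_iUnion, Set.mem_setOf_eq, Set.mem_univ, iff_true]
      obtain ⟨n, hn⟩ := exists_nat_ge (-(f x))
      exact ⟨n, by linarith⟩
    rw [huniv, measure_univ] at h2
    exact one_ne_zero h2
  have hupper : ∃ b : ℝ, μ {x | b ≤ f x} = 0 := by
    by_contra hcon
    push_neg at hcon
    have h1 : ∀ n : ℕ, μ ({x | (n:ℝ) ≤ f x}ᶜ) = 0 := by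
      intro n
      rcases key (n:ℝ) with h | h
      · exact absurd h (hcon _)
      · exact (prob_compl_eq_zero_iff (hlevmeas _)).mpr h
    have h2 : μ (⋃ n : ℕ, {x | (n:ℝ) ≤ f x}ᶜ) = 0 := measure_iUnion_null h1
    have huniv : (⋃ n : ℕ, {x | (n:ℝ) ≤ f x}ᶜ) = Set.univ := by
      ext x
      simp only [Set.mem_iUnion, Set.mem_compl_iff, Set.mem_setOf_eq, Set.mem_univ, iff_true]
      obtain ⟨n, hn⟩ := exists_nat_gt (f x)
      exact ⟨n, not_le.mpr hn⟩
    rw [huniv, measure_univ] at h2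
    exact one_ne_zero h2
  have hTbdd : BddAbove T := by
    obtain ⟨b, hb⟩ := hupper
    refine ⟨b, fun c hc => ?_⟩
    by_contra hlt
    push_neg at hlt
    have hmono : μ {x | c ≤ f x} ≤ μ {x | b ≤ f x} :=
      measure_mono (fun x hx => le_trans hlt.le hx)
    rw [hb, hc] at hmono
    exact (by norm_num : ¬ ((1:ℝ≥0∞) ≤ 0)) hmono
  set c₀ : ℝ := sSup T with hc0
  have hge : μ {x | c₀ ≤ f x} = 1 := by
    have hseq : ∀ n : ℕ, μ ({x | c₀ - 1/((n:ℝ)+1) ≤ f x}ᶜ) = 0 := by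
      intro n
      have hpos : (0:ℝ) < 1/((n:ℝ)+1) := by positivity
      have hlt : c₀ - 1/((n:ℝ)+1) < c₀ := by linarith
      obtain ⟨d, hdT, hdgt⟩ := exists_lt_of_lt_csSup hTne hlt
      have h1 : (1:ℝ≥0∞) ≤ μ {x | c₀ - 1/((n:ℝ)+1) ≤ f x} := by
        calc (1:ℝ≥0∞) = μ {x | d ≤ f x} := hdT.symm
          _ ≤ μ {x | c₀ - 1/((n:ℝ)+1) ≤ f x} :=
              measure_mono (fun x hx => le_trans hdgt.le hx)
      exact (prob_compl_eq_zero_iff (hlevmeas _)).mpr (le_antisymm prob_le_one h1)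
    have h2 : μ (⋃ n : ℕ, {x | c₀ - 1/((n:ℝ)+1) ≤ f x}ᶜ) = 0 := measure_iUnion_null hseq
    have hsub : {x | c₀ ≤ f x}ᶜ ⊆ ⋃ n : ℕ, {x | c₀ - 1/((n:ℝ)+1) ≤ f x}ᶜ := by
      intro x hx
      simp only [Set.mem_compl_iff, Set.mem_setOf_eq, not_le] at hx
      simp only [Set.mem_iUnion, Set.mem_compl_iff, Set.mem_setOf_eq, not_le]
      obtain ⟨n, hn⟩ := exists_nat_one_div_lt (show (0:ℝ) < c₀ - f x by linarith)
      exact ⟨n, by linarith⟩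
    have h3 : μ ({x | c₀ ≤ f x}ᶜ) = 0 := measure_mono_null hsub h2
    exact (prob_compl_eq_zero_iff (hlevmeas _)).mp h3
  have hgt : μ {x | c₀ < f x} = 0 := by
    have hseq : ∀ n : ℕ, μ {x | c₀ + 1/((n:ℝ)+1) ≤ f x} = 0 := by
      intro n
      rcases key (c₀ + 1/((n:ℝ)+1)) with h | h
      · exact h
      · exfalso
        have hle : c₀ + 1/((n:ℝ)+1) ≤ c₀ := le_csSup hTbdd h
        have hpos : (0:ℝ) < 1/((n:ℝ)+1) := by positivity
        linarith
    have hsub : {x | c₀ < f x} ⊆ ⋃ n : ℕ, {x | c₀ + 1/((n:ℝ)+1) ≤ f x} := by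
      intro x hx
      simp only [Set.mem_setOf_eq] at hx
      simp only [Set.mem_iUnion, Set.mem_setOf_eq]
      obtain ⟨n, hn⟩ := exists_nat_one_div_lt (show (0:ℝ) < f x - c₀ by linarith)
      exact ⟨n, by linarith⟩
    exact measure_mono_null hsub (measure_iUnion_null hseq)
  refine ⟨c₀, ?_⟩
  rw [ae_iff]
  have hsub : {x | ¬ f x = c₀} ⊆ {x | c₀ < f x} ∪ {x | c₀ ≤ f x}ᶜ := by
    intro x hx
    rcases lt_trichotomy (f x) c₀ with h | h | h
    · exact Or.inr (by simp only [Set.mem_compl_iff, Set.mem_setOf_eq, not_le]; exact h)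
    · exact absurd h hx
    · exact Or.inl h
  refine measure_mono_null hsub (measure_union_null hgt ?_)
  exact (prob_compl_eq_zero_iff (hlevmeas _)).mpr hge
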